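/- If A is a bounded Wajsberg pseudo-hoop, then every Boolean filter of A (a filter F with x ∨ x^- ∈ F and x ∨ x^∼ ∈ F for all x) is an involutive filter. -/
import Mathlib


universe u v

class PseudoHoop (A : Type u) extends One A, Mul A where
  rimp : A → A → A
  limp : A → A → A
  mul_one' : ∀ x : A, x * 1 = x
  one_mul' : ∀ x : A, 1 * x = x
  rimp_self : ∀ x : A, rimp x x = 1
  limp_self : ∀ x : A, limp x x = 1
  mul_rimp : ∀ x y z : A, rimp (x * y) z = rimp x (rimp y z)
  mul_limp : ∀ x y z : A, limp (x * y) z = limp y (limp x z)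
  div₁ : ∀ x y : A, (rimp x y) * x = (rimp y x) * y
  div₂ : ∀ x y : A, (rimp x y) * x = x * (limp x y)
  div₃ : ∀ x y : A, x * (limp x y) = y * (limp y x)

namespace PseudoHoop

/-- The order on a pseudo-hoop: `x ≤ y` iff `x → y = 1`. -/
def ple {A : Type u} [PseudoHoop A] (x y : A) : Prop := rimp x y = 1

/-- The meet `x ∧ y = (x → y) ⊙ x`. -/
def meet {A : Type u} [PseudoHoop A] (x y : A) : A := (rimp x y) * x

/-- `x ∨₁ y = (x → y) ⇝ y`. -/
def join₁ {A : Type u} [PseudoHoop A] (x y : A) : A := limp (rimp x y) y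

/-- `x ∨₂ y = (x ⇝ y) → y`. -/
def join₂ {A : Type u} [PseudoHoop A] (x y : A) : A := rimp (limp x y) y

/-- Iterated implication: `x →⁰ y = y`, `x →ⁿ⁺¹ y = x → (x →ⁿ y)`. -/
def rimpPow {A : Type u} [PseudoHoop A] (x : A) : ℕ → A → A
  | 0, y => y
  | n + 1, y => rimp x (rimpPow x n y)

/-- A filter of a pseudo-hoop. -/
structure IsFilter {A : Type u} [PseudoHoop A] (F : Set A) : Prop where
  nonempty : F.Nonempty
  mul_mem : ∀ {x y : A}, x ∈ F → y ∈ F → x * y ∈ F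
  upward : ∀ {x y : A}, x ∈ F → ple x y → y ∈ F

/-- A normal filter: `x → y ∈ F` iff `x ⇝ y ∈ F`. -/
def IsNormalFilter {A : Type u} [PseudoHoop A] (F : Set A) : Prop :=
  IsFilter F ∧ ∀ x y : A, rimp x y ∈ F ↔ limp x y ∈ F

def IsProper {A : Type u} [PseudoHoop A] (F : Set A) : Prop := F ≠ Set.univ

/-- A pseudo-hoop is simple if `{1}` is its unique proper filter. -/
def IsSimple (A : Type u) [PseudoHoop A] : Prop :=
  ∀ F : Set A, IsFilter F → IsProper F → F = {1}

/-- A pseudo-hoop is Wajsberg if `x ∨₁ y = y ∨₁ x` and `x ∨₂ y = y ∨₂ x`. -/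
def IsWajsberg (A : Type u) [PseudoHoop A] : Prop :=
  ∀ x y : A, join₁ x y = join₁ y x ∧ join₂ x y = join₂ y x

/-- A fantastic filter. -/
def IsFantasticFilter {A : Type u} [PseudoHoop A] (F : Set A) : Prop :=
  IsFilter F ∧ ∀ x y : A,
    (rimp y x ∈ F → rimp (join₁ x y) x ∈ F) ∧
    (limp y x ∈ F → limp (join₂ x y) x ∈ F)

def IS₂ {A : Type u} [PseudoHoop A] (μ : A → A) : Prop :=
  ∀ x y : A, μ (x * y) = μ x * μ (limp x (x * y)) ∧
    μ (x * y) = μ (rimp y (x * y)) * μ y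

def IS₃ {A : Type u} [PseudoHoop A] (μ : A → A) : Prop :=
  ∀ x y : A, μ (μ x * μ y) = μ x * μ y

def IS₄ {A : Type u} [PseudoHoop A] (μ : A → A) : Prop :=
  ∀ x y : A, μ (rimp (μ x) (μ y)) = rimp (μ x) (μ y) ∧
    μ (limp (μ x) (μ y)) = limp (μ x) (μ y)

/-- Type I state operator. -/
def IsStateI {A : Type u} [PseudoHoop A] (μ : A → A) : Prop :=
  (∀ x y : A, μ (rimp x y) = rimp (μ (join₁ x y)) (μ y) ∧
      μ (limp x y) = limp (μ (join₂ x y)) (μ y)) ∧ IS₂ μ ∧ IS₃ μ ∧ IS₄ μ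

/-- Type II state operator. -/
def IsStateII {A : Type u} [PseudoHoop A] (μ : A → A) : Prop :=
  (∀ x y : A, μ (rimp x y) = rimp (μ (join₁ y x)) (μ y) ∧
      μ (limp x y) = limp (μ (join₂ y x)) (μ y)) ∧ IS₂ μ ∧ IS₃ μ ∧ IS₄ μ

/-- Type III state operator. -/
def IsStateIII {A : Type u} [PseudoHoop A] (μ : A → A) : Prop :=
  (∀ x y : A, μ (rimp x y) = rimp (μ x) (μ (meet x y)) ∧
      μ (limp x y) = limp (μ x) (μ (meet x y))) ∧ IS₂ μ ∧ IS₃ μ ∧ IS₄ μ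

end PseudoHoop

open PseudoHoop

/-- A bounded pseudo-hoop: a pseudo-hoop with a least element `0`. -/
class BoundedPseudoHoop (A : Type u) extends PseudoHoop A, Zero A where
  zero_le : ∀ x : A, rimp 0 x = 1

namespace BoundedPseudoHoop

/-- `x⁻ = x → 0`. -/
def negr {A : Type u} [BoundedPseudoHoop A] (x : A) : A := rimp x 0

/-- `x∼ = x ⇝ 0`. -/
def negl {A : Type u} [BoundedPseudoHoop A] (x : A) : A := limp x 0

/-- A bounded pseudo-hoop is good if `x⁻∼ = x∼⁻` for all `x`. -/
def IsGood (A : Type u) [BoundedPseudoHoop A] : Prop :=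
  ∀ x : A, negl (negr x) = negr (negl x)

/-- A bounded pseudo-hoop is involutive if `x⁻∼ = x∼⁻ = x` for all `x`. -/
def IsInvolutive (A : Type u) [BoundedPseudoHoop A] : Prop :=
  ∀ x : A, negl (negr x) = x ∧ negr (negl x) = x

/-- The set of dense elements. -/
def Den (A : Type u) [BoundedPseudoHoop A] : Set A :=
  {x : A | negl (negr x) = 1}

/-- An involutive filter: `x⁻∼ → x ∈ F` and `x∼⁻ ⇝ x ∈ F` for all `x`. -/
def IsInvolutiveFilter {A : Type u} [BoundedPseudoHoop A] (F : Set A) : Prop :=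
  IsFilter F ∧ ∀ x : A, rimp (negl (negr x)) x ∈ F ∧ limp (negr (negl x)) x ∈ F

end BoundedPseudoHoop

open BoundedPseudoHoop

section Aux

variable {A : Type u} [PseudoHoop A]

private lemma aux_one_rimp_eq (x : A) : rimp 1 x = (rimp x 1) * x := by
  have h := PseudoHoop.div₁ (1 : A) x
  rwa [PseudoHoop.mul_one'] at h

private lemma aux_rimp_expand (y z : A) : rimp y z = rimp 1 (rimp y z) := by
  have h := PseudoHoop.mul_rimp (1 : A) y z
  rwa [PseudoHoop.one_mul'] at h

private lemma aux_L3 (x : A) : rimp (rimp 1 x) 1 = 1 := by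
  rw [aux_one_rimp_eq, PseudoHoop.mul_rimp, PseudoHoop.rimp_self]

private lemma aux_L3' (x : A) : rimp (rimp x 1) 1 = 1 := by
  rw [aux_rimp_expand x 1]; exact aux_L3 _

private lemma aux_L4 (x : A) : rimp x (rimp 1 x) = 1 := by
  have h := PseudoHoop.mul_rimp x (1 : A) x
  rw [PseudoHoop.mul_one', PseudoHoop.rimp_self] at h
  exact h.symm

private lemma aux_L5 (x : A) : rimp (rimp 1 x) x = 1 := by
  rw [aux_one_rimp_eq, PseudoHoop.mul_rimp, PseudoHoop.rimp_self, aux_L3']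

private lemma aux_antisym {u v : A} (h1 : rimp u v = 1) (h2 : rimp v u = 1) : u = v := by
  calc u = (rimp u v) * u := by rw [h1, PseudoHoop.one_mul']
    _ = (rimp v u) * v := PseudoHoop.div₁ u v
    _ = v := by rw [h2, PseudoHoop.one_mul']

lemma one_rimp (x : A) : rimp 1 x = x := aux_antisym (aux_L5 x) (aux_L4 x)

lemma rimp_one (x : A) : rimp x 1 = 1 := by
  have h := aux_L3 x
  rwa [one_rimp] at h

private lemma aux_one_limp_eq (x : A) : limp 1 x = x * (limp x 1) := by
  have h := PseudoHoop.div₃ (1 : A) x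
  rwa [PseudoHoop.one_mul'] at h

private lemma aux_limp_expand (y z : A) : limp y z = limp 1 (limp y z) := by
  have h := PseudoHoop.mul_limp y (1 : A) z
  rwa [PseudoHoop.mul_one'] at h

private lemma aux_M3 (x : A) : limp (limp 1 x) 1 = 1 := by
  rw [aux_one_limp_eq, PseudoHoop.mul_limp, PseudoHoop.limp_self]

private lemma aux_M3' (x : A) : limp (limp x 1) 1 = 1 := by
  rw [aux_limp_expand x 1]; exact aux_M3 _

private lemma aux_M4 (x : A) : limp x (limp 1 x) = 1 := by
  have h := PseudoHoop.mul_limp (1 : A) x x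
  rw [PseudoHoop.one_mul', PseudoHoop.limp_self] at h
  exact h.symm

private lemma aux_M5 (x : A) : limp (limp 1 x) x = 1 := by
  rw [aux_one_limp_eq, PseudoHoop.mul_limp, PseudoHoop.limp_self, aux_M3']

private lemma aux_antisym' {u v : A} (h1 : limp u v = 1) (h2 : limp v u = 1) : u = v := by
  calc u = u * (limp u v) := by rw [h1, PseudoHoop.mul_one']
    _ = v * (limp v u) := PseudoHoop.div₃ u v
    _ = v := by rw [h2, PseudoHoop.mul_one']

lemma one_limp (x : A) : limp 1 x = x := aux_antisym' (aux_M5 x) (aux_M4 x)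

lemma limp_one (x : A) : limp x 1 = 1 := by
  have h := aux_M3 x
  rwa [one_limp] at h

lemma limp_eq_one_of_rimp {x y : A} (h : rimp x y = 1) : limp x y = 1 := by
  have hx : x = y * (limp y x) := by
    calc x = (rimp x y) * x := by rw [h, PseudoHoop.one_mul']
      _ = x * (limp x y) := PseudoHoop.div₂ x y
      _ = y * (limp y x) := PseudoHoop.div₃ x y
  calc limp x y = limp (y * (limp y x)) y := by rw [← hx]
    _ = limp (limp y x) (limp y y) := PseudoHoop.mul_limp _ _ _
    _ = 1 := by rw [PseudoHoop.limp_self, limp_one]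

end Aux

theorem stmt16 {A : Type u} [BoundedPseudoHoop A] (hw : IsWajsberg A)
    (F : Set A) (hF : IsFilter F)
    (hB : ∀ x : A, join₁ x (negr x) ∈ F ∧ join₁ x (negl x) ∈ F) :
    IsInvolutiveFilter F := by
  have one_mem : (1 : A) ∈ F := by
    obtain ⟨a, ha⟩ := hF.nonempty
    exact hF.upward ha (rimp_one a)
  refine ⟨hF, fun x => ?_⟩
  have h1 : negl (negr x) = x := by
    have := (hw x 0).1
    unfold join₁ at this
    rw [BoundedPseudoHoop.zero_le, one_limp] at this
    exact this
  have h2 : negr (negl x) = x := by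
    have := (hw x 0).2
    unfold join₂ at this
    rw [limp_eq_one_of_rimp (BoundedPseudoHoop.zero_le x), one_rimp] at this
    exact this
  constructor
  · rw [h1, PseudoHoop.rimp_self]; exact one_mem
  · rw [h2, PseudoHoop.limp_self]; exact one_mem
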